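/- Let R and S be disjoint finite sets of labelled vertices, each vertex carrying a position in ℝ², and let D(r,s) denote the ℓ1 distance between positions. Let γ be a real number. Let M_OFF and M be matchings between R and S (sets of pairs in R × S in which no vertex occurs in more than one pair), and suppose every vertex saturated by M_OFF is also saturated by M. Let z be a real-valued function on R ∪ S satisfying: z(r) + z(s) ≤ γ·D(r,s) for every (r,s) ∈ M; z(r) + z(s) = D(r,s) for every (r,s) ∈ M_OFF; and z(v) = 0 for every vertex v that is saturated by M but not saturated by M_OFF. Then Σ_{(r,s) ∈ M_OFF} D(r,s) ≤ γ · Σ_{(r,s) ∈ M} D(r,s). -/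

import Mathlib

open Finset

/-- ℓ1 distance in the time-augmented (TA) plane. -/
def taDist (p q : ℝ × ℝ) : ℝ := |p.1 - q.1| + |p.2 - q.2|

/-- Lemma B.5 (diffM): if every vertex saturated by the offline matching `MOFF`
is also saturated by a matching `M`, and the duals are feasible on `M`, tight on
`MOFF`, and zero on vertices saturated by `M` but not by `MOFF`, then
`D(MOFF) ≤ γ·D(M)`. -/
theorem offline_matching_dist_le {R S : Type*}
    (posR : R → ℝ × ℝ) (posS : S → ℝ × ℝ) (γ : ℝ)
    (MOFF M : Finset (R × S))
    (hMOFFmatch : ∀ e ∈ MOFF, ∀ e' ∈ MOFF, e.1 = e'.1 ∨ e.2 = e'.2 → e = e')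
    (hMmatch : ∀ e ∈ M, ∀ e' ∈ M, e.1 = e'.1 ∨ e.2 = e'.2 → e = e')
    (hsat : ∀ e ∈ MOFF, (∃ e' ∈ M, e'.1 = e.1) ∧ (∃ e' ∈ M, e'.2 = e.2))
    (zR : R → ℝ) (zS : S → ℝ)
    (hfeas : ∀ e ∈ M, zR e.1 + zS e.2 ≤ γ * taDist (posR e.1) (posS e.2))
    (htight : ∀ e ∈ MOFF, zR e.1 + zS e.2 = taDist (posR e.1) (posS e.2))
    (hzeroR : ∀ e ∈ M, (∀ e' ∈ MOFF, e'.1 ≠ e.1) → zR e.1 = 0)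
    (hzeroS : ∀ e ∈ M, (∀ e' ∈ MOFF, e'.2 ≠ e.2) → zS e.2 = 0) :
    ∑ e ∈ MOFF, taDist (posR e.1) (posS e.2)
      ≤ γ * ∑ e ∈ M, taDist (posR e.1) (posS e.2) := by
  classical
  have hR : ∑ e ∈ M, zR e.1 = ∑ e ∈ MOFF, zR e.1 := by
    rw [← Finset.sum_filter_of_ne
        (p := fun e : R × S => ∃ e' ∈ MOFF, e'.1 = e.1)
        (f := fun e : R × S => zR e.1)
        (fun e he hne => by
          by_contra h
          exact hne (hzeroR e he (fun e' he' heq => h ⟨e', he', heq⟩)))]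
    refine Finset.sum_bij'
      (fun e he => ((Finset.mem_filter.mp he).2).choose)
      (fun e he => ((hsat e he).1).choose)
      (fun e he => ((Finset.mem_filter.mp he).2).choose_spec.1)
      (fun e he => by
        have hs := ((hsat e he).1).choose_spec
        exact Finset.mem_filter.mpr ⟨hs.1, ⟨e, he, hs.2.symm⟩⟩)
      ?_ ?_ ?_
    · intro e he
      have hs1 := ((Finset.mem_filter.mp he).2).choose_spec
      set e1 := ((Finset.mem_filter.mp he).2).choose
      have hs2 := ((hsat e1 hs1.1).1).choose_spec
      exact hMmatch _ hs2.1 e (Finset.mem_filter.mp he).1 (Or.inl (hs2.2.trans hs1.2))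
    · intro e he
      have hs1 := ((hsat e he).1).choose_spec
      set e1 := ((hsat e he).1).choose
      have hf : e1 ∈ M.filter (fun e : R × S => ∃ e' ∈ MOFF, e'.1 = e.1) :=
        Finset.mem_filter.mpr ⟨hs1.1, ⟨e, he, hs1.2.symm⟩⟩
      have hs2 := ((Finset.mem_filter.mp hf).2).choose_spec
      exact hMOFFmatch _ hs2.1 e he (Or.inl (hs2.2.trans hs1.2))
    · intro e he
      have hs1 := ((Finset.mem_filter.mp he).2).choose_spec
      rw [hs1.2]
  have hS : ∑ e ∈ M, zS e.2 = ∑ e ∈ MOFF, zS e.2 := by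
    rw [← Finset.sum_filter_of_ne
        (p := fun e : R × S => ∃ e' ∈ MOFF, e'.2 = e.2)
        (f := fun e : R × S => zS e.2)
        (fun e he hne => by
          by_contra h
          exact hne (hzeroS e he (fun e' he' heq => h ⟨e', he', heq⟩)))]
    refine Finset.sum_bij'
      (fun e he => ((Finset.mem_filter.mp he).2).choose)
      (fun e he => ((hsat e he).2).choose)
      (fun e he => ((Finset.mem_filter.mp he).2).choose_spec.1)
      (fun e he => by
        have hs := ((hsat e he).2).choose_spec
        exact Finset.mem_filter.mpr ⟨hs.1, ⟨e, he, hs.2.symm⟩⟩)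
      ?_ ?_ ?_
    · intro e he
      have hs1 := ((Finset.mem_filter.mp he).2).choose_spec
      set e1 := ((Finset.mem_filter.mp he).2).choose
      have hs2 := ((hsat e1 hs1.1).2).choose_spec
      exact hMmatch _ hs2.1 e (Finset.mem_filter.mp he).1 (Or.inr (hs2.2.trans hs1.2))
    · intro e he
      have hs1 := ((hsat e he).2).choose_spec
      set e1 := ((hsat e he).2).choose
      have hf : e1 ∈ M.filter (fun e : R × S => ∃ e' ∈ MOFF, e'.2 = e.2) :=
        Finset.mem_filter.mpr ⟨hs1.1, ⟨e, he, hs1.2.symm⟩⟩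
      have hs2 := ((Finset.mem_filter.mp hf).2).choose_spec
      exact hMOFFmatch _ hs2.1 e he (Or.inr (hs2.2.trans hs1.2))
    · intro e he
      have hs1 := ((Finset.mem_filter.mp he).2).choose_spec
      rw [hs1.2]
  calc ∑ e ∈ MOFF, taDist (posR e.1) (posS e.2)
      = ∑ e ∈ MOFF, (zR e.1 + zS e.2) :=
        Finset.sum_congr rfl (fun e he => (htight e he).symm)
    _ = ∑ e ∈ M, (zR e.1 + zS e.2) := by
        rw [Finset.sum_add_distrib, Finset.sum_add_distrib, hR, hS]
    _ ≤ ∑ e ∈ M, γ * taDist (posR e.1) (posS e.2) :=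
        Finset.sum_le_sum hfeas
    _ = γ * ∑ e ∈ M, taDist (posR e.1) (posS e.2) := by
        rw [Finset.mul_sum]
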